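/- Let ν be a game on a finite set N (ν(∅)=0) with Möbius transform m(A) = ∑_{B⊆A} (−1)^{|A∖B|} ν(B), and let f : N → ℝ₊. Then the Choquet integral of f with respect to ν equals ∑_{A ⊆ N, A ≠ ∅} m(A) · min_{i∈A} f(i). -/

import Mathlib

open scoped Classical

lemma neg_one_pow_powerset_sum {α : Type*} [DecidableEq α] (x : Finset α) :
    (∑ B ∈ x.powerset, (-1 : ℝ) ^ B.card) = if x = ∅ then 1 else 0 := by
  have h := Finset.sum_powerset_neg_one_pow_card (x := x)
  have h2 : ((∑ B ∈ x.powerset, (-1 : ℤ) ^ B.card : ℤ) : ℝ)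
      = ∑ B ∈ x.powerset, (-1 : ℝ) ^ B.card := by push_cast; rfl
  rw [← h2, h]
  split <;> simp

lemma mobius_inv {α : Type*} [DecidableEq α]
    (ν : Finset α → ℝ) (m : Finset α → ℝ)
    (hm : ∀ A : Finset α,
      m A = ∑ B ∈ A.powerset, (-1 : ℝ) ^ (A.card - B.card) * ν B)
    (A : Finset α) : ν A = ∑ B ∈ A.powerset, m B := by
  simp only [hm]
  rw [Finset.sum_comm' (t' := A.powerset)
    (s' := fun C => A.powerset.filter (fun B => C ⊆ B))
    (by
      intro B C
      simp only [Finset.mem_powerset, Finset.mem_filter]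
      constructor
      · rintro ⟨h1, h2⟩; exact ⟨⟨h1, h2⟩, h2.trans h1⟩
      · rintro ⟨⟨h1, h2⟩, _⟩; exact ⟨h1, h2⟩)]
  have key : ∀ C ∈ A.powerset,
      (∑ B ∈ A.powerset.filter (fun B => C ⊆ B), (-1 : ℝ) ^ (B.card - C.card) * ν C)
      = (if C = A then 1 else 0) * ν C := by
    intro C hC
    rw [Finset.mem_powerset] at hC
    rw [← Finset.sum_mul]
    congr 1
    have key2 : (∑ B ∈ A.powerset.filter (fun B => C ⊆ B), (-1 : ℝ) ^ (B.card - C.card))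
        = ∑ D ∈ (A \ C).powerset, (-1 : ℝ) ^ D.card := by
      apply Finset.sum_nbij' (fun B => B \ C) (fun D => D ∪ C)
      · intro B hB
        simp only [Finset.mem_filter, Finset.mem_powerset] at hB ⊢
        exact Finset.sdiff_subset_sdiff hB.1 le_rfl
      · intro D hD
        simp only [Finset.mem_powerset] at hD
        simp only [Finset.mem_filter, Finset.mem_powerset]
        exact ⟨Finset.union_subset (hD.trans (Finset.sdiff_subset)) hC, Finset.subset_union_right⟩
      · intro B hB
        simp only [Finset.mem_filter, Finset.mem_powerset] at hB
        rw [Finset.sdiff_union_of_subset hB.2]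
      · intro D hD
        simp only [Finset.mem_powerset] at hD
        rw [Finset.union_sdiff_right]
        exact Finset.sdiff_eq_self_of_disjoint (Finset.disjoint_left.mpr
          (fun a ha => (Finset.mem_sdiff.mp (hD ha)).2))
      · intro B hB
        simp only [Finset.mem_filter, Finset.mem_powerset] at hB
        rw [Finset.card_sdiff_of_subset hB.2]
    rw [key2, neg_one_pow_powerset_sum]
    have : (A \ C = ∅) ↔ (C = A) := by
      rw [Finset.sdiff_eq_empty_iff_subset]
      exact ⟨fun h => (Finset.Subset.antisymm hC h).symm ▸ rfl, fun h => h ▸ le_rfl⟩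
    simp [this]
  rw [Finset.sum_congr rfl key]
  simp [ite_mul, Finset.sum_ite_eq', Finset.mem_powerset]

theorem choquet_eq_sum_mobius_min
    (n : ℕ) (f : Fin n → ℝ) (hf : ∀ i, 0 ≤ f i)
    (ν : Finset (Fin n) → ℝ) (hν0 : ν ∅ = 0)
    (m : Finset (Fin n) → ℝ)
    (hm : ∀ A : Finset (Fin n),
      m A = ∑ B ∈ A.powerset, (-1 : ℝ) ^ (A.card - B.card) * ν B)
    (π : Equiv.Perm (Fin n))
    (hπ : ∀ i j : Fin n, i ≤ j → f (π j) ≤ f (π i)) :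
    ∑ i : Fin n,
        (f (π i) - (if h : (i : ℕ) + 1 < n then f (π ⟨(i : ℕ) + 1, h⟩) else 0)) *
          ν ((Finset.univ.filter fun k : Fin n => k ≤ i).image π) =
      ∑ A ∈ Finset.univ.filter (fun A : Finset (Fin n) => A.Nonempty),
        m A * sInf (f '' ↑A) := by
  set S : Fin n → Finset (Fin n) :=
    fun i => (Finset.univ.filter fun k : Fin n => k ≤ i).image π with hS
  set Δ : Fin n → ℝ :=
    fun i => f (π i) - (if h : (i : ℕ) + 1 < n then f (π ⟨(i : ℕ) + 1, h⟩) else 0) with hΔ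
  have hmem : ∀ (i : Fin n) (b : Fin n), b ∈ S i ↔ π.symm b ≤ i := by
    intro i b
    simp only [hS, Finset.mem_image, Finset.mem_filter, Finset.mem_univ, true_and]
    constructor
    · rintro ⟨k, hk, rfl⟩; simpa using hk
    · intro h; exact ⟨π.symm b, h, by simp⟩
  have hm0 : m ∅ = 0 := by
    rw [hm]; simp [hν0]
  -- G : the values of f along π, extended by 0
  set G : ℕ → ℝ := fun j => if h : j < n then f (π ⟨j, h⟩) else 0 with hG
  have hΔG : ∀ i : Fin n, Δ i = G (i : ℕ) - G ((i : ℕ) + 1) := by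
    intro i
    simp only [hΔ, hG, dif_pos i.isLt, Fin.eta]
  -- the key evaluation of the inner sum for nonempty B
  have key : ∀ B : Finset (Fin n), B.Nonempty →
      (∑ i : Fin n, if B ⊆ S i then Δ i else 0) = sInf (f '' ↑B) := by
    intro B hB
    have hBim : (B.image π.symm).Nonempty := hB.image _
    set K : Fin n := (B.image π.symm).max' hBim with hK
    have hsub : ∀ i : Fin n, B ⊆ S i ↔ K ≤ i := by
      intro i
      constructor
      · intro h
        apply Finset.max'_le
        intro y hy
        rw [Finset.mem_image] at hy
        obtain ⟨b, hb, rfl⟩ := hy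
        exact (hmem i b).mp (h hb)
      · intro h b hb
        rw [hmem i b]
        exact le_trans (Finset.le_max' _ _ (Finset.mem_image_of_mem _ hb)) h
    have hKmem : π K ∈ B := by
      have := Finset.max'_mem (B.image π.symm) hBim
      rw [← hK, Finset.mem_image] at this
      obtain ⟨b, hb, hbe⟩ := this
      rw [← hbe]; simpa using hb
    have hKmin : ∀ b ∈ B, f (π K) ≤ f b := by
      intro b hb
      have h1 : π.symm b ≤ K := Finset.le_max' _ _ (Finset.mem_image_of_mem _ hb)
      have := hπ _ _ h1
      simpa using this
    have hsinf : sInf (f '' ↑B) = f (π K) := by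
      apply le_antisymm
      · exact csInf_le (B.finite_toSet.image f).bddBelow ⟨π K, by simpa using hKmem, rfl⟩
      · apply le_csInf ((Finset.coe_nonempty.mpr hB).image f)
        rintro y ⟨b, hb, rfl⟩
        exact hKmin b (by simpa using hb)
    rw [hsinf]
    -- telescoping
    have step1 : (∑ i : Fin n, if B ⊆ S i then Δ i else 0)
        = ∑ j ∈ Finset.range n, if (K : ℕ) ≤ j then G j - G (j + 1) else 0 := by
      rw [← Fin.sum_univ_eq_sum_range (fun j => if (K : ℕ) ≤ j then G j - G (j + 1) else 0) n]
      apply Finset.sum_congr rfl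
      intro i _
      simp only [hsub i, Fin.le_def, hΔG i]
    have step2 : (∑ j ∈ Finset.range n, if (K : ℕ) ≤ j then G j - G (j + 1) else 0)
        = ∑ j ∈ Finset.Ico (K : ℕ) n, (G j - G (j + 1)) := by
      rw [← Finset.sum_filter]
      congr 1
      ext j
      simp only [Finset.mem_filter, Finset.mem_range, Finset.mem_Ico]
      tauto
    have step3 : (∑ j ∈ Finset.Ico (K : ℕ) n, (G j - G (j + 1))) = G (K : ℕ) := by
      rw [Finset.sum_Ico_eq_sub _ (le_of_lt K.isLt)]
      rw [Finset.sum_range_sub' G, Finset.sum_range_sub' G]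
      have hGn : G n = 0 := by simp [hG]
      rw [hGn]; ring
    rw [step1, step2, step3]
    simp [hG, dif_pos K.isLt, Fin.eta]
  -- main computation
  calc ∑ i : Fin n, Δ i * ν (S i)
      = ∑ i : Fin n, ∑ B ∈ (Finset.univ : Finset (Fin n)).powerset,
          (if B ⊆ S i then Δ i * m B else 0) := by
        apply Finset.sum_congr rfl
        intro i _
        rw [mobius_inv ν m hm (S i), Finset.mul_sum, ← Finset.sum_filter]
        congr 1
        ext B
        simp only [Finset.mem_powerset, Finset.mem_filter, Finset.subset_univ, true_and]
    _ = ∑ B ∈ (Finset.univ : Finset (Fin n)).powerset,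
          ∑ i : Fin n, (if B ⊆ S i then Δ i * m B else 0) := Finset.sum_comm
    _ = ∑ B ∈ (Finset.univ : Finset (Fin n)).powerset,
          m B * ∑ i : Fin n, (if B ⊆ S i then Δ i else 0) := by
        apply Finset.sum_congr rfl
        intro B _
        rw [Finset.mul_sum]
        apply Finset.sum_congr rfl
        intro i _
        split_ifs <;> ring
    _ = ∑ B ∈ Finset.univ.filter (fun A : Finset (Fin n) => A.Nonempty),
          m B * ∑ i : Fin n, (if B ⊆ S i then Δ i else 0) := by
        rw [Finset.powerset_univ]
        rw [Finset.sum_filter_of_ne]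
        intro B _ hne
        rw [Finset.nonempty_iff_ne_empty]
        intro h
        rw [h, hm0, zero_mul] at hne
        exact hne rfl
    _ = ∑ A ∈ Finset.univ.filter (fun A : Finset (Fin n) => A.Nonempty),
          m A * sInf (f '' ↑A) := by
        apply Finset.sum_congr rfl
        intro B hBmem
        rw [Finset.mem_filter] at hBmem
        rw [key B hBmem.2]
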